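/- Let P be a tower of height δ with δ inaccessible. If A ⊆ P is a maximal antichain, then there is a disjoint maximal antichain B refining A (every element of B lies below some element of A); moreover if q ∈ B, p ∈ A, and q ≤ p, then q and p are compatible-equivalent (q forces p ∈ G and p forces q ∈ G). -/

import Mathlib

universe u

/-- `F` is a normal filter on `𝒫(X)` for a set `X` (in the ZF universe): a proper
filter on the powerset of `X` that is fine and closed under diagonal intersections. -/
structure IsNormalFilterZ (X : ZFSet.{u}) (F : Set ZFSet.{u}) : Prop where
  mem_sub : ∀ A ∈ F, A ⊆ X.powerset
  inter_mem : ∀ A ∈ F, ∀ B ∈ F, A ∩ B ∈ F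
  superset_mem : ∀ A ∈ F, ∀ B : ZFSet.{u}, A ⊆ B → B ⊆ X.powerset → B ∈ F
  proper : (∅ : ZFSet.{u}) ∉ F
  fine : ∀ x ∈ X, ZFSet.sep (fun a => x ∈ a) X.powerset ∈ F
  normal : ∀ A : ZFSet.{u} → ZFSet.{u}, (∀ x ∈ X, A x ∈ F) →
    ZFSet.sep (fun a => ∀ x ∈ a, a ∈ A x) X.powerset ∈ F

/-- A tower of normal filters of height `δ`: each `X ∈ V_δ` (i.e. of rank `< δ`)
carries a normal filter `F X` on `𝒫(X)`, and for `X ⊆ Y` the filter `F Y` projects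
to `F X` (`B ∈ F X` iff `{a ⊆ Y : a ∩ X ∈ B} ∈ F Y`). -/
structure TowerZ (δ : Ordinal.{u}) where
  F : ZFSet.{u} → Set ZFSet.{u}
  normal : ∀ X : ZFSet.{u}, X.rank < δ → IsNormalFilterZ X (F X)
  projects : ∀ X Y : ZFSet.{u}, X.rank < δ → Y.rank < δ → X ⊆ Y →
    ∀ B : ZFSet.{u}, B ⊆ X.powerset →
      (B ∈ F X ↔ ZFSet.sep (fun a => a ∩ X ∈ B) Y.powerset ∈ F Y)

/-- The tower ordering: `p ≤ q` iff `⋃ p ⊇ ⋃ q` and every `a ∈ p` satisfies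
`a ∩ ⋃ q ∈ q`. -/
def Tle (p q : ZFSet.{u}) : Prop :=
  ZFSet.sUnion q ⊆ ZFSet.sUnion p ∧ ∀ a ∈ p, a ∩ ZFSet.sUnion q ∈ q

namespace TowerZ

variable {δ : Ordinal.{u}} (T : TowerZ δ)

/-- `S` is `F X`-positive: a subset of `𝒫(X)` whose complement in `𝒫(X)` is not
in `F X`. -/
def Pos (X S : ZFSet.{u}) : Prop :=
  S ⊆ X.powerset ∧ ZFSet.sep (fun a => a ∉ S) X.powerset ∉ T.F X

/-- The conditions of the tower: the sets in `V_δ` positive for some `F X`. -/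
def Cond (S : ZFSet.{u}) : Prop :=
  ∃ X : ZFSet.{u}, X.rank < δ ∧ T.Pos X S

/-- Compatibility in the tower ordering. -/
def Compat (p q : ZFSet.{u}) : Prop :=
  ∃ r : ZFSet.{u}, T.Cond r ∧ Tle r p ∧ Tle r q

/-- `A` is a maximal antichain of the tower. -/
def MaxAC (A : Set ZFSet.{u}) : Prop :=
  (∀ p ∈ A, T.Cond p) ∧ (∀ p ∈ A, ∀ q ∈ A, p ≠ q → ¬ T.Compat p q) ∧
  (∀ p : ZFSet.{u}, T.Cond p → ∃ q ∈ A, T.Compat p q)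

/-- `G` is a generic filter on the tower: a filter on the poset of conditions
meeting every maximal antichain (of the ground model). -/
def Generic (G : Set ZFSet.{u}) : Prop :=
  (∀ p ∈ G, T.Cond p) ∧
  (∀ p ∈ G, ∀ q : ZFSet.{u}, T.Cond q → Tle p q → q ∈ G) ∧
  (∀ p ∈ G, ∀ q ∈ G, ∃ r ∈ G, Tle r p ∧ Tle r q) ∧
  (∀ A : Set ZFSet.{u}, T.MaxAC A → ∃ p ∈ A, p ∈ G)

/-- `p` forces `q ∈ G`: every condition below `p` is compatible with `q`. -/
def Forces (p q : ZFSet.{u}) : Prop :=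
  ∀ r : ZFSet.{u}, T.Cond r → Tle r p → T.Compat r q

end TowerZ

/-- `p` and `q` are disjoint conditions: for any `Z ∈ V_δ` containing `⋃ p` and
`⋃ q`, no `a ⊆ Z` satisfies both `a ∩ ⋃ p ∈ p` and `a ∩ ⋃ q ∈ q`. -/
def Disj (δ : Ordinal.{u}) (p q : ZFSet.{u}) : Prop :=
  ∀ Z : ZFSet.{u}, Z.rank < δ → ZFSet.sUnion p ⊆ Z → ZFSet.sUnion q ⊆ Z →
    ∀ a ∈ Z.powerset, ¬ (a ∩ ZFSet.sUnion p ∈ p ∧ a ∩ ZFSet.sUnion q ∈ q)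

/-! ### Auxiliary development -/

noncomputable def tIdx (o : Ordinal.{u}) (i : o.ToType) : Ordinal.{u} :=
  @Ordinal.typein o.ToType (· < ·) isWellOrder_lt i

theorem tIdx_lt (o : Ordinal.{u}) (i : o.ToType) : tIdx o i < o :=
  Ordinal.typein_lt_self i

theorem tIdx_surj (o : Ordinal.{u}) {β : Ordinal.{u}} (h : β < o) : ∃ i, tIdx o i = β := by
  have h' : β < @Ordinal.type o.ToType (· < ·) isWellOrder_lt := by
    rw [Ordinal.type_toType]; exact h
  exact ⟨@Ordinal.enum o.ToType (· < ·) isWellOrder_lt ⟨β, h'⟩,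
    @Ordinal.typein_enum o.ToType (· < ·) isWellOrder_lt β h'⟩

noncomputable def VZ (o : Ordinal.{u}) : ZFSet.{u} :=
  ZFSet.sUnion (ZFSet.range.{u,u} (fun i : o.ToType => ZFSet.powerset (VZ (tIdx o i))))
termination_by o
decreasing_by exact tIdx_lt o i

theorem mem_VZ : ∀ (o : Ordinal.{u}) (x : ZFSet.{u}), x ∈ VZ o ↔ x.rank < o := by
  intro o
  induction o using Ordinal.induction with
  | _ o IH =>
    intro x
    rw [VZ]
    simp only [ZFSet.mem_sUnion, ZFSet.mem_range, Set.mem_range]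
    constructor
    · rintro ⟨z, ⟨i, rfl⟩, hx⟩
      rw [ZFSet.mem_powerset] at hx
      have hβ := tIdx_lt o i
      have : x.rank ≤ tIdx o i := by
        rw [ZFSet.rank_le_iff]
        intro y hy
        exact (IH _ hβ y).1 (hx hy)
      exact lt_of_le_of_lt this hβ
    · intro h
      obtain ⟨i, hi⟩ := tIdx_surj o h
      refine ⟨ZFSet.powerset (VZ (tIdx o i)), ⟨i, rfl⟩, ?_⟩
      rw [ZFSet.mem_powerset, hi]
      intro y hy
      exact (IH _ h y).2 (ZFSet.rank_lt_of_mem hy)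

theorem rank_VZ_le (o : Ordinal.{u}) : (VZ o).rank ≤ o :=
  ZFSet.rank_le_iff.2 fun _ hy => (mem_VZ o _).1 hy

namespace TowerZ

variable {δ : Ordinal.{u}} (T : TowerZ δ)

theorem pow_mem {X : ZFSet.{u}} (hX : X.rank < δ) : X.powerset ∈ T.F X := by
  have hN := T.normal X hX
  have h := hN.normal (fun x => ZFSet.sep (fun a => x ∈ a) X.powerset) hN.fine
  have he : ZFSet.sep
      (fun a => ∀ x ∈ a, a ∈ (fun x => ZFSet.sep (fun a => x ∈ a) X.powerset) x) X.powerset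
      = X.powerset := by
    apply ZFSet.ext
    intro a
    simp only [ZFSet.mem_sep, ZFSet.mem_powerset]
    constructor
    · rintro ⟨h1, -⟩; exact h1
    · intro h1; exact ⟨h1, fun x hx => ⟨h1, hx⟩⟩
  rwa [he] at h

theorem pos_super {X S S' C : ZFSet.{u}} (hX : X.rank < δ) (hS : T.Pos X S)
    (hC : C ∈ T.F X) (hS' : S' ⊆ X.powerset)
    (h : ∀ a, a ∈ S → a ∈ C → a ∈ S') : T.Pos X S' := by
  refine ⟨hS', fun hmem => ?_⟩
  have hN := T.normal X hX
  have h2 : (ZFSet.sep (fun a => a ∉ S') X.powerset) ∩ C ∈ T.F X :=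
    hN.inter_mem _ hmem _ hC
  apply hS.2
  refine hN.superset_mem _ h2 _ ?_ ?_
  · intro a ha
    rw [ZFSet.mem_inter] at ha
    obtain ⟨h1, hc⟩ := ha
    rw [ZFSet.mem_sep] at h1 ⊢
    exact ⟨h1.1, fun haS => h1.2 (h a haS hc)⟩
  · intro a ha
    rw [ZFSet.mem_sep] at ha
    rw [ZFSet.mem_powerset]
    rw [ZFSet.mem_powerset] at ha
    exact ha.1

theorem pos_nonempty {X S : ZFSet.{u}} (hX : X.rank < δ) (hS : T.Pos X S) :
    ∃ a, a ∈ S := by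
  by_contra h
  push_neg at h
  apply hS.2
  have he : ZFSet.sep (fun a => a ∉ S) X.powerset = X.powerset := by
    apply ZFSet.ext
    intro a
    simp only [ZFSet.mem_sep, ZFSet.mem_powerset]
    exact ⟨fun h1 => h1.1, fun h1 => ⟨h1, h a⟩⟩
  rw [he]
  exact T.pow_mem hX

theorem pos_cover {X S : ZFSet.{u}} (hX : X.rank < δ) (hS : T.Pos X S)
    {y : ZFSet.{u}} (hy : y ∈ X) : ∃ a, a ∈ S ∧ y ∈ a := by
  have hfine := (T.normal X hX).fine y hy
  have hpos : T.Pos X (ZFSet.sep (fun a => a ∈ S ∧ y ∈ a) X.powerset) := by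
    refine T.pos_super hX hS hfine ?_ ?_
    · intro a ha; rw [ZFSet.mem_sep] at ha; rw [ZFSet.mem_powerset]
      rw [ZFSet.mem_powerset] at ha; exact ha.1
    · intro a haS haf
      rw [ZFSet.mem_sep] at haf ⊢
      exact ⟨haf.1, haS, haf.2⟩
  obtain ⟨a, ha⟩ := T.pos_nonempty hX hpos
  rw [ZFSet.mem_sep] at ha
  exact ⟨a, ha.2⟩

theorem pos_sub {X S : ZFSet.{u}} (hS : T.Pos X S) {a : ZFSet.{u}} (ha : a ∈ S) : a ⊆ X := by
  have := hS.1 ha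
  rwa [ZFSet.mem_powerset] at this

theorem pos_pre {X Z S : ZFSet.{u}} (hX : X.rank < δ) (hZ : Z.rank < δ) (hXZ : X ⊆ Z)
    (hS : T.Pos X S) : T.Pos Z (ZFSet.sep (fun c => c ∩ X ∈ S) Z.powerset) := by
  constructor
  · intro a ha; rw [ZFSet.mem_sep] at ha; exact ha.1
  · intro hmem
    apply hS.2
    have hsub : ZFSet.sep (fun a => a ∉ S) X.powerset ⊆ X.powerset := by
      intro a ha; rw [ZFSet.mem_sep] at ha; exact ha.1
    rw [T.projects X Z hX hZ hXZ _ hsub]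
    have he : ZFSet.sep (fun a => a ∩ X ∈ ZFSet.sep (fun b => b ∉ S) X.powerset) Z.powerset
        = ZFSet.sep (fun a => a ∉ ZFSet.sep (fun c => c ∩ X ∈ S) Z.powerset) Z.powerset := by
      apply ZFSet.ext
      intro a
      simp only [ZFSet.mem_sep, ZFSet.mem_powerset]
      constructor
      · rintro ⟨haZ, -, hns⟩
        exact ⟨haZ, fun hc => hns hc.2⟩
      · rintro ⟨haZ, hns⟩
        refine ⟨haZ, fun y hy => (ZFSet.mem_inter.1 hy).2, fun hc => hns ⟨haZ, hc⟩⟩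
    rw [he]
    exact hmem

theorem cond_base {p : ZFSet.{u}} (hp : T.Cond p) :
    (ZFSet.sUnion p).rank < δ ∧ T.Pos (ZFSet.sUnion p) p := by
  obtain ⟨X, hX, hsub, hpos⟩ := hp
  have hUsub : ZFSet.sUnion p ⊆ X := by
    intro y hy
    rw [ZFSet.mem_sUnion] at hy
    obtain ⟨c, hc, hyc⟩ := hy
    have := hsub hc
    rw [ZFSet.mem_powerset] at this
    exact this hyc
  have hU : (ZFSet.sUnion p).rank < δ := lt_of_le_of_lt (ZFSet.rank_mono hUsub) hX
  have hppow : p ⊆ (ZFSet.sUnion p).powerset := by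
    intro c hc
    rw [ZFSet.mem_powerset]
    intro y hy
    exact ZFSet.mem_sUnion.2 ⟨c, hc, hy⟩
  refine ⟨hU, hppow, fun hmem => ?_⟩
  apply hpos
  have hsub2 : ZFSet.sep (fun a => a ∉ p) (ZFSet.sUnion p).powerset
      ⊆ (ZFSet.sUnion p).powerset := by
    intro a ha; rw [ZFSet.mem_sep] at ha; exact ha.1
  rw [T.projects (ZFSet.sUnion p) X hU hX hUsub _ hsub2] at hmem
  have hN := T.normal X hX
  refine hN.superset_mem _ hmem _ ?_ ?_
  · intro a ha
    rw [ZFSet.mem_sep] at ha ⊢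
    obtain ⟨haX, ha2⟩ := ha
    rw [ZFSet.mem_sep] at ha2
    refine ⟨haX, fun hap => ha2.2 ?_⟩
    have : a ∩ ZFSet.sUnion p = a := by
      apply ZFSet.ext
      intro y
      rw [ZFSet.mem_inter]
      exact ⟨fun h => h.1, fun h => ⟨h, (ZFSet.mem_powerset.1 (hppow hap)) h⟩⟩
    rwa [this]
  · intro a ha; rw [ZFSet.mem_sep] at ha; exact ha.1

end TowerZ

theorem tle_refl (p : ZFSet.{u}) : Tle p p := by
  refine ⟨fun y hy => hy, fun a ha => ?_⟩
  have : a ∩ ZFSet.sUnion p = a := by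
    apply ZFSet.ext
    intro y
    rw [ZFSet.mem_inter]
    exact ⟨fun h => h.1, fun h => ⟨h, ZFSet.mem_sUnion.2 ⟨a, ha, h⟩⟩⟩
  rwa [this]

theorem tle_trans {p q r : ZFSet.{u}} (h1 : Tle p q) (h2 : Tle q r) : Tle p r := by
  refine ⟨fun y hy => h1.1 (h2.1 hy), fun a ha => ?_⟩
  have hq := h1.2 a ha
  have := h2.2 _ hq
  have he : a ∩ ZFSet.sUnion q ∩ ZFSet.sUnion r = a ∩ ZFSet.sUnion r := by
    apply ZFSet.ext
    intro y
    simp only [ZFSet.mem_inter]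
    exact ⟨fun h => ⟨h.1.1, h.2⟩, fun h => ⟨⟨h.1, h2.1 h.2⟩, h.2⟩⟩
  rwa [he] at this

theorem disj_symm {δ : Ordinal.{u}} {p q : ZFSet.{u}} (h : Disj δ p q) : Disj δ q p :=
  fun Z hZ h1 h2 a ha hc => h Z hZ h2 h1 a ha ⟨hc.2, hc.1⟩

theorem disj_incompat {δ : Ordinal.{u}} (T : TowerZ δ) {q q' : ZFSet.{u}}
    (h : Disj δ q q') : ¬ T.Compat q q' := by
  rintro ⟨r, hr, ⟨hU1, hP1⟩, ⟨hU2, hP2⟩⟩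
  obtain ⟨X, hX, hpos⟩ := hr
  obtain ⟨a, ha⟩ := T.pos_nonempty hX hpos
  have hUr : ZFSet.sUnion r ⊆ X := by
    intro y hy
    rw [ZFSet.mem_sUnion] at hy
    obtain ⟨c, hc, hyc⟩ := hy
    exact (T.pos_sub hpos hc) hyc
  exact h X hX (fun y hy => hUr (hU1 hy)) (fun y hy => hUr (hU2 hy)) a
    (hpos.1 ha) ⟨hP1 a ha, hP2 a ha⟩

/-- The "marker + diagonal" predicate used to disjointify conditions below `p`. -/
def PrD (A : Set ZFSet.{u}) (p d : ZFSet.{u}) : Prop :=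
  p ∈ d ∧ ∀ x ∈ d, x ∈ A → x ≠ p →
    ¬(d ∩ ZFSet.sUnion p ∈ p ∧ d ∩ ZFSet.sUnion x ∈ x)

/-- The disjointified condition below `p` (relative to the antichain `A`). -/
noncomputable def bigq (A : Set ZFSet.{u}) (p : ZFSet.{u}) : ZFSet.{u} :=
  ZFSet.sep (fun d => d ∩ ZFSet.sUnion p ∈ p ∧ PrD A p d) (VZ (p.rank + 1)).powerset

section Main

variable {δ : Ordinal.{u}} (T : TowerZ δ) (hδ : Order.IsSuccLimit δ)
variable {A : Set ZFSet.{u}} (hA : T.MaxAC A)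
variable {p : ZFSet.{u}} (hp : p ∈ A)

include hδ hA hp in
theorem rank_lt_of_mem_A : p.rank < δ := by
  obtain ⟨X, hX, hsub, -⟩ := hA.1 p hp
  have h1 : p.rank ≤ X.rank + 1 := by
    have := ZFSet.rank_mono hsub
    rwa [ZFSet.rank_powerset, ← Ordinal.add_one_eq_succ] at this
  have h2 : X.rank + 1 < δ := by
    rw [Ordinal.add_one_eq_succ]; exact hδ.succ_lt hX
  exact lt_of_le_of_lt h1 h2

include hδ hA hp in
theorem rank_succ_lt : p.rank + 1 < δ := by
  rw [Ordinal.add_one_eq_succ]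
  exact hδ.succ_lt (rank_lt_of_mem_A T hδ hA hp)

include hδ hA hp in
theorem rank_VZp_lt : (VZ (p.rank + 1)).rank < δ :=
  lt_of_le_of_lt (rank_VZ_le _) (rank_succ_lt T hδ hA hp)

theorem mem_VZp_self (p : ZFSet.{u}) : p ∈ VZ (p.rank + 1) := by
  rw [mem_VZ, Ordinal.add_one_eq_succ]
  exact Order.lt_succ _

theorem sUnion_subset_VZp {p x : ZFSet.{u}} (hx : x.rank ≤ p.rank) :
    ZFSet.sUnion x ⊆ VZ (p.rank + 1) := by
  intro y hy
  rw [ZFSet.mem_sUnion] at hy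
  obtain ⟨c, hc, hyc⟩ := hy
  rw [mem_VZ]
  have h1 : y.rank < c.rank := ZFSet.rank_lt_of_mem hyc
  have h2 : c.rank < x.rank := ZFSet.rank_lt_of_mem hc
  have h3 : y.rank < p.rank := lt_of_lt_of_le (h1.trans h2) hx
  rw [Ordinal.add_one_eq_succ]
  exact h3.trans (Order.lt_succ _)

theorem mem_VZp_rank_le {p x : ZFSet.{u}} (hx : x ∈ VZ (p.rank + 1)) : x.rank ≤ p.rank := by
  rw [mem_VZ, Ordinal.add_one_eq_succ, Order.lt_succ_iff] at hx
  exact hx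

include hδ hA hp in
theorem diagL_mem :
    ZFSet.sep (PrD A p) (VZ (p.rank + 1)).powerset ∈ T.F (VZ (p.rank + 1)) := by
  classical
  set Z := VZ (p.rank + 1) with hZdef
  have hZ : Z.rank < δ := rank_VZp_lt T hδ hA hp
  have hN := T.normal Z hZ
  set Ax : ZFSet.{u} → ZFSet.{u} := fun x =>
    if x ∈ A ∧ x ≠ p then
      ZFSet.sep (fun d => ¬(d ∩ ZFSet.sUnion p ∈ p ∧ d ∩ ZFSet.sUnion x ∈ x)) Z.powerset
    else Z.powerset with hAxdef
  have hAx : ∀ x ∈ Z, Ax x ∈ T.F Z := by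
    intro x hxZ
    by_cases hc : x ∈ A ∧ x ≠ p
    · rw [show Ax x = ZFSet.sep
        (fun d => ¬(d ∩ ZFSet.sUnion p ∈ p ∧ d ∩ ZFSet.sUnion x ∈ x)) Z.powerset from by
          rw [hAxdef]; exact if_pos hc]
      by_contra hnot
      have hposS : T.Pos Z (ZFSet.sep
          (fun d => d ∩ ZFSet.sUnion p ∈ p ∧ d ∩ ZFSet.sUnion x ∈ x) Z.powerset) := by
        refine ⟨fun a ha => (ZFSet.mem_sep.1 ha).1, fun hmem => hnot ?_⟩
        have he : ZFSet.sep (fun a => a ∉ ZFSet.sep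
            (fun d => d ∩ ZFSet.sUnion p ∈ p ∧ d ∩ ZFSet.sUnion x ∈ x) Z.powerset) Z.powerset
            = ZFSet.sep (fun d => ¬(d ∩ ZFSet.sUnion p ∈ p ∧ d ∩ ZFSet.sUnion x ∈ x))
              Z.powerset := by
          apply ZFSet.ext
          intro a
          simp only [ZFSet.mem_sep]
          tauto
        rwa [he] at hmem
      have hUp : ZFSet.sUnion p ⊆ Z := sUnion_subset_VZp (le_refl _)
      have hUx : ZFSet.sUnion x ⊆ Z := sUnion_subset_VZp (mem_VZp_rank_le hxZ)
      have hcompat : T.Compat p x := by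
        refine ⟨_, ⟨Z, hZ, hposS⟩, ⟨?_, ?_⟩, ⟨?_, ?_⟩⟩
        · intro y hy
          obtain ⟨a, haS, hya⟩ := T.pos_cover hZ hposS (hUp hy)
          exact ZFSet.mem_sUnion.2 ⟨a, haS, hya⟩
        · intro a ha
          exact (ZFSet.mem_sep.1 ha).2.1
        · intro y hy
          obtain ⟨a, haS, hya⟩ := T.pos_cover hZ hposS (hUx hy)
          exact ZFSet.mem_sUnion.2 ⟨a, haS, hya⟩
        · intro a ha
          exact (ZFSet.mem_sep.1 ha).2.2
      exact hA.2.1 p hp x hc.1 (Ne.symm hc.2) hcompat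
    · rw [show Ax x = Z.powerset from by rw [hAxdef]; exact if_neg hc]
      exact T.pow_mem hZ
  have hW := hN.normal Ax hAx
  have hfine := hN.fine p (mem_VZp_self p)
  have hinter := hN.inter_mem _ hfine _ hW
  refine hN.superset_mem _ hinter _ ?_ ?_
  · intro d hd
    rw [ZFSet.mem_inter] at hd
    obtain ⟨hd1, hd2⟩ := hd
    rw [ZFSet.mem_sep] at hd1 hd2 ⊢
    refine ⟨hd1.1, hd1.2, ?_⟩
    intro x hxd hxA hxp hboth
    have hdx := hd2.2 x hxd
    rw [show Ax x = ZFSet.sep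
      (fun d => ¬(d ∩ ZFSet.sUnion p ∈ p ∧ d ∩ ZFSet.sUnion x ∈ x)) Z.powerset from by
        rw [hAxdef]; exact if_pos ⟨hxA, hxp⟩] at hdx
    exact (ZFSet.mem_sep.1 hdx).2 hboth
  · intro d hd
    exact (ZFSet.mem_sep.1 hd).1

include hδ hA hp in
theorem bigq_pos : T.Pos (VZ (p.rank + 1)) (bigq A p) := by
  set Z := VZ (p.rank + 1)
  have hZ : Z.rank < δ := rank_VZp_lt T hδ hA hp
  obtain ⟨hUrank, hUpos⟩ := T.cond_base (hA.1 p hp)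
  have hUp : ZFSet.sUnion p ⊆ Z := sUnion_subset_VZp (le_refl _)
  have hpre := T.pos_pre hUrank hZ hUp hUpos
  refine T.pos_super hZ hpre (diagL_mem T hδ hA hp) ?_ ?_
  · intro a ha
    exact (ZFSet.mem_sep.1 ha).1
  · intro a h1 h2
    rw [ZFSet.mem_sep] at h1 h2
    exact ZFSet.mem_sep.2 ⟨h1.1, h1.2, h2.2⟩

include hδ hA hp in
theorem bigq_sUnion : ZFSet.sUnion (bigq A p) = VZ (p.rank + 1) := by
  set Z := VZ (p.rank + 1)
  have hZ : Z.rank < δ := rank_VZp_lt T hδ hA hp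
  have hpos := bigq_pos T hδ hA hp
  apply ZFSet.ext
  intro y
  constructor
  · intro hy
    rw [ZFSet.mem_sUnion] at hy
    obtain ⟨c, hc, hyc⟩ := hy
    exact (T.pos_sub hpos hc) hyc
  · intro hy
    obtain ⟨a, haS, hya⟩ := T.pos_cover hZ hpos hy
    exact ZFSet.mem_sUnion.2 ⟨a, haS, hya⟩

include hδ hA hp in
theorem bigq_le : Tle (bigq A p) p := by
  constructor
  · rw [bigq_sUnion T hδ hA hp]
    exact sUnion_subset_VZp (le_refl _)
  · intro a ha
    exact (ZFSet.mem_sep.1 ha).2.1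

include hδ hA hp in
theorem bigq_cond : T.Cond (bigq A p) :=
  ⟨VZ (p.rank + 1), rank_VZp_lt T hδ hA hp, bigq_pos T hδ hA hp⟩

theorem ZF_inter_absorb {a b c : ZFSet.{u}} (h : c ⊆ b) : a ∩ b ∩ c = a ∩ c := by
  apply ZFSet.ext
  intro y
  simp only [ZFSet.mem_inter]
  exact ⟨fun hh => ⟨hh.1.1, hh.2⟩, fun hh => ⟨⟨hh.1, h hh.2⟩, hh.2⟩⟩

include hδ hA hp in
theorem bigq_compat {s : ZFSet.{u}} (hs : T.Cond s) (hsp : Tle s p) :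
    T.Compat s (bigq A p) := by
  have hZp : (VZ (p.rank + 1)).rank < δ := rank_VZp_lt T hδ hA hp
  obtain ⟨hUs_rank, hUs_pos⟩ := T.cond_base hs
  set Zp := VZ (p.rank + 1) with hZpdef
  set Z2 := ZFSet.sUnion s ∪ Zp with hZ2def
  have hZ2r : Z2.rank < δ := by
    rw [hZ2def, ZFSet.rank_union]; exact max_lt hUs_rank hZp
  have hsZ2 : ZFSet.sUnion s ⊆ Z2 := fun y hy => ZFSet.mem_union.2 (Or.inl hy)
  have hZpZ2 : Zp ⊆ Z2 := fun y hy => ZFSet.mem_union.2 (Or.inr hy)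
  have hpre := T.pos_pre hUs_rank hZ2r hsZ2 hUs_pos
  have hL := diagL_mem T hδ hA hp
  have hLsub : ZFSet.sep (PrD A p) Zp.powerset ⊆ Zp.powerset :=
    fun a ha => (ZFSet.mem_sep.1 ha).1
  have hM : ZFSet.sep (fun c => c ∩ Zp ∈ ZFSet.sep (PrD A p) Zp.powerset) Z2.powerset
      ∈ T.F Z2 := by
    rw [← T.projects Zp Z2 hZp hZ2r hZpZ2 _ hLsub]
    exact hL
  have hUpZp : ZFSet.sUnion p ⊆ Zp := sUnion_subset_VZp (le_refl _)
  have ht : T.Pos Z2 (ZFSet.sep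
      (fun c => c ∩ ZFSet.sUnion s ∈ s ∧ c ∩ Zp ∈ bigq A p) Z2.powerset) := by
    refine T.pos_super hZ2r hpre hM ?_ ?_
    · intro a ha; exact (ZFSet.mem_sep.1 ha).1
    · intro a h1 h2
      rw [ZFSet.mem_sep] at h1 h2 ⊢
      refine ⟨h1.1, h1.2, ?_⟩
      obtain ⟨-, h2⟩ := h2
      rw [ZFSet.mem_sep] at h2
      refine ZFSet.mem_sep.2 ⟨h2.1, ?_, h2.2⟩
      have e1 : a ∩ Zp ∩ ZFSet.sUnion p = a ∩ ZFSet.sUnion p := ZF_inter_absorb hUpZp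
      have e2 : a ∩ ZFSet.sUnion s ∩ ZFSet.sUnion p = a ∩ ZFSet.sUnion p :=
        ZF_inter_absorb hsp.1
      rw [e1, ← e2]
      exact hsp.2 _ h1.2
  refine ⟨_, ⟨Z2, hZ2r, ht⟩, ⟨?_, ?_⟩, ⟨?_, ?_⟩⟩
  · intro y hy
    obtain ⟨b, hbS, hyb⟩ := T.pos_cover hZ2r ht (hsZ2 hy)
    exact ZFSet.mem_sUnion.2 ⟨b, hbS, hyb⟩
  · intro b hb
    exact (ZFSet.mem_sep.1 hb).2.1
  · rw [bigq_sUnion T hδ hA hp]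
    intro y hy
    obtain ⟨b, hbS, hyb⟩ := T.pos_cover hZ2r ht (hZpZ2 hy)
    exact ZFSet.mem_sUnion.2 ⟨b, hbS, hyb⟩
  · intro b hb
    rw [bigq_sUnion T hδ hA hp]
    exact (ZFSet.mem_sep.1 hb).2.2

include hδ hA in
theorem bigq_disj {p p' : ZFSet.{u}} (hp : p ∈ A) (hp' : p' ∈ A) (hne : p ≠ p')
    (hrk : p'.rank ≤ p.rank) : Disj δ (bigq A p) (bigq A p') := by
  intro Z' hZ' hU1 hU2 a ha hcontra
  obtain ⟨h1, h2⟩ := hcontra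
  rw [bigq_sUnion T hδ hA hp] at h1
  rw [bigq_sUnion T hδ hA hp'] at h2
  have h1' := ZFSet.mem_sep.1 h1
  have h2' := ZFSet.mem_sep.1 h2
  have hp'a : p' ∈ a := (ZFSet.mem_inter.1 h2'.2.2.1).1
  have hp'Zp : p' ∈ VZ (p.rank + 1) := by
    rw [mem_VZ, Ordinal.add_one_eq_succ, Order.lt_succ_iff]
    exact hrk
  have hp'c : p' ∈ a ∩ VZ (p.rank + 1) := ZFSet.mem_inter.2 ⟨hp'a, hp'Zp⟩
  have hkey := h1'.2.2.2 p' hp'c hp' (Ne.symm hne)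
  apply hkey
  refine ⟨h1'.2.1, ?_⟩
  have e1 : a ∩ VZ (p.rank + 1) ∩ ZFSet.sUnion p' = a ∩ ZFSet.sUnion p' :=
    ZF_inter_absorb (sUnion_subset_VZp hrk)
  have e2 : a ∩ VZ (p'.rank + 1) ∩ ZFSet.sUnion p' = a ∩ ZFSet.sUnion p' :=
    ZF_inter_absorb (sUnion_subset_VZp (le_refl _))
  rw [e1, ← e2]
  exact h2'.2.1

end Main

/-- Let `P` be a tower of height `δ = κ.ord` with `κ` inaccessible.  Every maximal
antichain `A` of `P` has a disjoint maximal antichain `B` refining it; moreover if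
`q ∈ B`, `p ∈ A` and `q ≤ p`, then `q ∼ p` (each forces the other into the generic
filter). -/
theorem stmt14 (κ : Cardinal.{u}) (hκ : κ.IsInaccessible) (T : TowerZ κ.ord)
    (A : Set ZFSet.{u}) (hA : T.MaxAC A) :
    ∃ B : Set ZFSet.{u}, T.MaxAC B ∧
      (∀ q ∈ B, ∀ q' ∈ B, q ≠ q' → Disj κ.ord q q') ∧
      (∀ q ∈ B, ∃ p ∈ A, Tle q p) ∧
      (∀ q ∈ B, ∀ p ∈ A, Tle q p → T.Forces q p ∧ T.Forces p q) := by
  have hδ : Order.IsSuccLimit (κ.ord) := Cardinal.isSuccLimit_ord hκ.1.le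
  refine ⟨(bigq A) '' A, ⟨?_, ?_, ?_⟩, ?_, ?_, ?_⟩
  · rintro q ⟨p, hp, rfl⟩
    exact bigq_cond T hδ hA hp
  · rintro q ⟨p, hp, rfl⟩ q' ⟨p', hp', rfl⟩ hne
    have hpp' : p ≠ p' := fun h => hne (by rw [h])
    rcases le_total p'.rank p.rank with h | h
    · exact disj_incompat T (bigq_disj T hδ hA hp hp' hpp' h)
    · exact disj_incompat T (disj_symm (bigq_disj T hδ hA hp' hp (Ne.symm hpp') h))
  · intro r hr
    obtain ⟨p, hp, s, hs, hsr, hsp⟩ := hA.2.2 r hr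
    obtain ⟨t, ht, hts, htq⟩ := bigq_compat T hδ hA hp hs hsp
    exact ⟨bigq A p, ⟨p, hp, rfl⟩, t, ht, tle_trans hts hsr, htq⟩
  · rintro q ⟨p, hp, rfl⟩ q' ⟨p', hp', rfl⟩ hne
    have hpp' : p ≠ p' := fun h => hne (by rw [h])
    rcases le_total p'.rank p.rank with h | h
    · exact bigq_disj T hδ hA hp hp' hpp' h
    · exact disj_symm (bigq_disj T hδ hA hp' hp (Ne.symm hpp') h)
  · rintro q ⟨p, hp, rfl⟩
    exact ⟨p, hp, bigq_le T hδ hA hp⟩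
  · rintro q ⟨p'', hp'', rfl⟩ p hp hqp
    have hpeq : p = p'' := by
      by_contra hne
      exact hA.2.1 p hp p'' hp'' hne
        ⟨bigq A p'', bigq_cond T hδ hA hp'', hqp, bigq_le T hδ hA hp''⟩
    subst hpeq
    constructor
    · intro r hr hrq
      exact ⟨r, hr, tle_refl r, tle_trans hrq hqp⟩
    · intro r hr hrp
      exact bigq_compat T hδ hA hp hr hrp
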